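/- Let δ > 0 and let G be a finite Borel measure on [0,∞) with G((δ,∞)) = 0. Then there exists a constant C > 0, depending only on δ and G([0,δ]), such that for every integer L ≥ 2, Σ_{l=L}^∞ (2l+1)·C_l ≤ (C/Γ(L − 1/2)²)·(δ/2)^{2L}. -/

import Mathlib

open MeasureTheory Real Set

/-- Bessel function of the first kind of real order `ν`, via its power series
(with real powers; for `ν > 0` this gives `besselJ ν 0 = 0`). -/
noncomputable def besselJ (ν x : ℝ) : ℝ :=
  ∑' n : ℕ, ((-1 : ℝ) ^ n / (n.factorial * Real.Gamma ((n : ℝ) + ν + 1))) *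
    (x / 2) ^ (2 * (n : ℝ) + ν)

/-- The integrand `J_{l+1/2}(μ)² / μ`, with its value at `μ = 0` defined by
continuous extension (`2/π` for `l = 0`, `0` for `l ≥ 1`). -/
noncomputable def besselInt (l : ℕ) (μ : ℝ) : ℝ :=
  if μ = 0 then (if l = 0 then 2 / Real.pi else 0)
  else besselJ ((l : ℝ) + 1 / 2) μ ^ 2 / μ

/-- Angular power spectrum `C_l = C_l(0,0) = 2π² ∫ J_{l+1/2}(μ)²/μ G(dμ)` of the
initial random condition. -/
noncomputable def Cl0 (G : MeasureTheory.Measure ℝ) (l : ℕ) : ℝ :=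
  2 * Real.pi ^ 2 * ∫ μ in Set.Ici (0 : ℝ), besselInt l μ ∂G

lemma gamma_mul_factorial_le {x : ℝ} (hx : 1 ≤ x) (m : ℕ) :
    Real.Gamma x * m.factorial ≤ Real.Gamma (x + m) := by
  have hΓx : 0 < Real.Gamma x := Real.Gamma_pos_of_pos (by linarith)
  induction m with
  | zero => simp
  | succ n ih =>
      have hpos : (0:ℝ) < x + n := by positivity
      have h1 : Real.Gamma (x + ((n:ℕ)+1:ℕ)) = (x + n) * Real.Gamma (x + n) := by
        push_cast
        rw [show x + ((n:ℝ)+1) = (x + (n:ℝ)) + 1 by ring, Real.Gamma_add_one (ne_of_gt hpos)]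
      rw [h1]
      calc Real.Gamma x * ((n+1).factorial : ℝ)
          = ((n:ℝ)+1) * (Real.Gamma x * n.factorial) := by
            push_cast [Nat.factorial_succ]; ring
        _ ≤ (x+n) * Real.Gamma (x+n) := by
            apply mul_le_mul (by linarith) ih (by positivity) (le_of_lt hpos)

/-- partial exponential-type sum -/
noncomputable def expS (y : ℝ) : ℝ := ∑' n : ℕ, (y ^ 2) ^ n / n.factorial

lemma summable_expS (y : ℝ) : Summable (fun n : ℕ => (y^2)^n / n.factorial) :=
  Real.summable_pow_div_factorial _

lemma one_le_expS (y : ℝ) : 1 ≤ expS y := by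
  have := Summable.le_tsum (summable_expS y) 0 (fun i _ => by positivity)
  simpa [expS] using this

lemma expS_mono {y z : ℝ} (hy : 0 ≤ y) (hz : y ≤ z) : expS y ≤ expS z := by
  apply Summable.tsum_le_tsum _ (summable_expS y) (summable_expS z)
  intro n
  gcongr

lemma abs_besselJ_le (l : ℕ) {x : ℝ} (hx : 0 < x) :
    |besselJ ((l:ℝ) + 1/2) x| ≤
      (x/2) ^ ((l:ℝ) + 1/2) / Real.Gamma ((l:ℝ) + 3/2) * expS (x/2) := by
  set ν : ℝ := (l:ℝ) + 1/2 with hν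
  have ht : (0:ℝ) < x/2 := by linarith
  have hν1 : (1:ℝ) ≤ ν + 1 := by
    have : (0:ℝ) ≤ l := Nat.cast_nonneg l
    rw [hν]; linarith
  have hΓpos : 0 < Real.Gamma (ν+1) := Real.Gamma_pos_of_pos (by linarith)
  set a : ℕ → ℝ := fun n =>
    ((-1:ℝ)^n / (n.factorial * Real.Gamma ((n:ℝ) + ν + 1))) * (x/2) ^ (2*(n:ℝ) + ν)
    with ha_def
  set c : ℕ → ℝ := fun n => (x/2)^ν / Real.Gamma (ν+1) * (((x/2)^2)^n / n.factorial)
    with hc_def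
  have hrpow : ∀ n : ℕ, (x/2) ^ (2*(n:ℝ) + ν) = ((x/2)^2)^n * (x/2)^ν := by
    intro n
    rw [Real.rpow_add ht]
    congr 1
    rw [show (2*(n:ℝ)) = ((2*n : ℕ) : ℝ) by push_cast; ring, Real.rpow_natCast, pow_mul]
  have hΓn : ∀ n : ℕ, Real.Gamma (ν+1) * n.factorial ≤ Real.Gamma ((n:ℝ) + ν + 1) := by
    intro n
    have := gamma_mul_factorial_le hν1 n
    rwa [show (ν+1)+(n:ℝ) = (n:ℝ) + ν + 1 by ring] at this
  have habs : ∀ n, |a n| ≤ c n := by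
    intro n
    have hfac : (1:ℝ) ≤ n.factorial := by exact_mod_cast Nat.one_le_iff_ne_zero.mpr n.factorial_ne_zero
    have hΓnpos : 0 < Real.Gamma ((n:ℝ) + ν + 1) := by
      have := hΓn n; nlinarith
    have h1 : |a n| = (x/2) ^ (2*(n:ℝ) + ν) / (n.factorial * Real.Gamma ((n:ℝ) + ν + 1)) := by
      have he : a n = ((-1:ℝ)^n) *
          ((x / 2) ^ (2*(n:ℝ) + ν) / (n.factorial * Real.Gamma ((n:ℝ) + ν + 1))) := by
        rw [ha_def]; ring
      rw [he, abs_mul, abs_pow, abs_neg, abs_one, one_pow, one_mul,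
        abs_of_pos (by positivity)]
    rw [h1, hrpow n, hc_def]
    have key : Real.Gamma (ν+1) * n.factorial ≤ n.factorial * Real.Gamma ((n:ℝ) + ν + 1) := by
      calc Real.Gamma (ν+1) * n.factorial ≤ Real.Gamma ((n:ℝ) + ν + 1) := hΓn n
        _ ≤ n.factorial * Real.Gamma ((n:ℝ) + ν + 1) := le_mul_of_one_le_left (le_of_lt hΓnpos) hfac
    have hnum : (0:ℝ) ≤ ((x/2)^2)^n * (x/2)^ν := by positivity
    calc ((x/2)^2)^n * (x/2)^ν / (n.factorial * Real.Gamma ((n:ℝ) + ν + 1))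
        ≤ ((x/2)^2)^n * (x/2)^ν / (Real.Gamma (ν+1) * n.factorial) := by
          apply div_le_div_of_nonneg_left hnum (by positivity) key
      _ = (x/2)^ν / Real.Gamma (ν+1) * (((x/2)^2)^n / n.factorial) := by
          field_simp
  have hc : Summable c := (summable_expS (x/2)).mul_left _
  have hca : Summable fun n => |a n| :=
    Summable.of_nonneg_of_le (fun n => abs_nonneg _) habs hc
  have ha : Summable a := hca.of_abs
  have h2 : |besselJ ν x| ≤ ∑' n, |a n| := by
    have := norm_tsum_le_tsum_norm (f := a) (by simpa only [Real.norm_eq_abs] using hca)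
    simpa only [besselJ, ha_def, Real.norm_eq_abs] using this
  have h3 : ∑' n, |a n| ≤ ∑' n, c n := Summable.tsum_le_tsum habs hca hc
  have h4 : ∑' n, c n = (x/2)^ν / Real.Gamma (ν+1) * expS (x/2) := by
    rw [hc_def, tsum_mul_left]; rfl
  have : Real.Gamma ((l:ℝ) + 3/2) = Real.Gamma (ν + 1) := by rw [hν]; congr 1; ring
  rw [this]
  calc |besselJ ν x| ≤ ∑' n, c n := le_trans h2 h3
    _ = (x/2)^ν / Real.Gamma (ν+1) * expS (x/2) := h4

lemma besselInt_le {δ : ℝ} (hδ : 0 < δ) {l : ℕ} (hl : 1 ≤ l) {μ : ℝ}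
    (hμ : μ ∈ Icc 0 δ) :
    besselInt l μ ≤ expS (δ/2)^2 * (δ/2)^(2*l) / Real.Gamma ((l:ℝ)+3/2)^2 := by
  obtain ⟨hμ0, hμδ⟩ := hμ
  have hΓ : 0 < Real.Gamma ((l:ℝ)+3/2) := Real.Gamma_pos_of_pos (by positivity)
  have hE1 : (1:ℝ) ≤ expS (δ/2) := one_le_expS _
  rcases eq_or_lt_of_le hμ0 with h0 | h0
  · have : besselInt l μ = 0 := by
      simp [besselInt, ← h0, Nat.one_le_iff_ne_zero.mp hl]
    rw [this]; positivity
  · have hne : μ ≠ 0 := ne_of_gt h0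
    rw [besselInt, if_neg hne]
    have hb : |besselJ ((l:ℝ) + 1/2) μ| ≤
        (μ/2) ^ ((l:ℝ) + 1/2) / Real.Gamma ((l:ℝ) + 3/2) * expS (δ/2) := by
      refine le_trans (abs_besselJ_le l h0) ?_
      have := expS_mono (by linarith : (0:ℝ) ≤ μ/2) (by linarith : μ/2 ≤ δ/2)
      have hrp : (0:ℝ) < (μ/2) ^ ((l:ℝ) + 1/2) := Real.rpow_pos_of_pos (by linarith) _
      gcongr
    have hbnn : 0 ≤ (μ/2) ^ ((l:ℝ) + 1/2) / Real.Gamma ((l:ℝ) + 3/2) * expS (δ/2) := by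
      have hrp : (0:ℝ) ≤ (μ/2) ^ ((l:ℝ) + 1/2) := (Real.rpow_pos_of_pos (by linarith) _).le
      positivity
    have hsq : besselJ ((l:ℝ) + 1/2) μ ^ 2 ≤
        ((μ/2) ^ ((l:ℝ) + 1/2))^2 * expS (δ/2)^2 / Real.Gamma ((l:ℝ) + 3/2)^2 := by
      have := mul_self_le_mul_self (abs_nonneg _) hb
      calc besselJ ((l:ℝ) + 1/2) μ ^ 2
          = |besselJ ((l:ℝ) + 1/2) μ| * |besselJ ((l:ℝ) + 1/2) μ| := by
            rw [← abs_mul, abs_mul_self]; ring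
        _ ≤ ((μ/2) ^ ((l:ℝ) + 1/2) / Real.Gamma ((l:ℝ) + 3/2) * expS (δ/2)) *
            ((μ/2) ^ ((l:ℝ) + 1/2) / Real.Gamma ((l:ℝ) + 3/2) * expS (δ/2)) := this
        _ = ((μ/2) ^ ((l:ℝ) + 1/2))^2 * expS (δ/2)^2 / Real.Gamma ((l:ℝ) + 3/2)^2 := by
            field_simp
    have hrw : ((μ/2) ^ ((l:ℝ) + 1/2))^2 = (μ/2)^(2*l+1) := by
      rw [← Real.rpow_natCast ((μ/2) ^ ((l:ℝ) + 1/2)) 2, ← Real.rpow_mul (by linarith)]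
      rw [show ((l:ℝ) + 1/2) * (2:ℕ) = ((2*l+1 : ℕ) : ℝ) by push_cast; ring,
        Real.rpow_natCast]
    have hkey : (μ/2)^(2*l+1) / μ ≤ (δ/2)^(2*l) := by
      have h1 : (μ/2)^(2*l+1) / μ = (μ/2)^(2*l) / 2 := by
        rw [pow_succ]; field_simp
      rw [h1]
      have h2 : (μ/2)^(2*l) ≤ (δ/2)^(2*l) := by gcongr <;> linarith
      have h3 : (0:ℝ) ≤ (μ/2)^(2*l) := by positivity
      linarith
    calc besselJ ((l:ℝ) + 1/2) μ ^ 2 / μ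
        ≤ (((μ/2) ^ ((l:ℝ) + 1/2))^2 * expS (δ/2)^2 / Real.Gamma ((l:ℝ) + 3/2)^2) / μ := by
          gcongr
      _ = ((μ/2)^(2*l+1) / μ) * (expS (δ/2)^2 / Real.Gamma ((l:ℝ) + 3/2)^2) := by
          rw [hrw]; field_simp
      _ ≤ (δ/2)^(2*l) * (expS (δ/2)^2 / Real.Gamma ((l:ℝ) + 3/2)^2) := by
          gcongr
      _ = expS (δ/2)^2 * (δ/2)^(2*l) / Real.Gamma ((l:ℝ)+3/2)^2 := by ring

lemma besselInt_nonneg {l : ℕ} {μ : ℝ} (hμ : 0 ≤ μ) : 0 ≤ besselInt l μ := by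
  rcases eq_or_lt_of_le hμ with h | h
  · rw [besselInt, if_pos h.symm]
    split <;> positivity
  · rw [besselInt, if_neg (ne_of_gt h)]
    positivity

lemma Cl0_le {δ : ℝ} (hδ : 0 < δ) (G : MeasureTheory.Measure ℝ) [IsFiniteMeasure G]
    (hsupp : G (Set.Ioi δ) = 0) {l : ℕ} (hl : 1 ≤ l) :
    Cl0 G l ≤ 2 * Real.pi ^ 2 * (G Set.univ).toReal *
      (expS (δ/2)^2 * (δ/2)^(2*l) / Real.Gamma ((l:ℝ)+3/2)^2) := by
  set B : ℝ := expS (δ/2)^2 * (δ/2)^(2*l) / Real.Gamma ((l:ℝ)+3/2)^2 with hB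
  have hΓ : 0 < Real.Gamma ((l:ℝ)+3/2) := Real.Gamma_pos_of_pos (by positivity)
  have hBnn : 0 ≤ B := by
    have := one_le_expS (δ/2); positivity
  have hres : ∀ᵐ μ ∂(G.restrict (Ici 0)), μ ∈ Icc 0 δ := by
    have h1 : ∀ᵐ μ ∂G, μ ∉ Ioi δ := by
      rw [MeasureTheory.ae_iff]
      convert hsupp using 2; ext; simp
    have h2 : ∀ᵐ μ ∂(G.restrict (Ici 0)), μ ∉ Ioi δ := ae_restrict_of_ae h1
    have h3 : ∀ᵐ μ ∂(G.restrict (Ici 0)), μ ∈ Ici 0 :=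
      ae_restrict_mem measurableSet_Ici
    filter_upwards [h2, h3] with μ hμ1 hμ2
    exact ⟨hμ2, not_lt.mp hμ1⟩
  have hint : ∫ μ in Set.Ici (0:ℝ), besselInt l μ ∂G ≤ B * (G Set.univ).toReal := by
    have hconst : Integrable (fun _ : ℝ => B) (G.restrict (Ici 0)) :=
      integrable_const _
    have hmono := MeasureTheory.integral_mono_of_nonneg
      (f := fun μ => besselInt l μ) (g := fun _ => B) (μ := G.restrict (Ici 0))
      (by filter_upwards [hres] with μ hμ; exact besselInt_nonneg hμ.1)
      hconst
      (by filter_upwards [hres] with μ hμ; exact besselInt_le hδ hl hμ)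
    rw [MeasureTheory.integral_const] at hmono
    refine le_trans hmono ?_
    rw [MeasureTheory.measureReal_def, MeasureTheory.Measure.restrict_apply_univ, smul_eq_mul, mul_comm]
    exact mul_le_mul_of_nonneg_left
      (ENNReal.toReal_mono (measure_ne_top G _) (measure_mono (subset_univ _))) hBnn
  rw [Cl0]
  calc 2 * Real.pi ^ 2 * ∫ μ in Set.Ici (0:ℝ), besselInt l μ ∂G
      ≤ 2 * Real.pi ^ 2 * (B * (G Set.univ).toReal) := by
        gcongr
    _ = 2 * Real.pi ^ 2 * (G Set.univ).toReal * B := by ring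


lemma key_ineq {L : ℕ} (hL : 2 ≤ L) (k : ℕ) {t : ℝ} (ht : 0 ≤ t) :
    (2*((L+k:ℕ):ℝ)+1) * t^(2*(L+k)) / Real.Gamma (((L+k:ℕ):ℝ)+3/2)^2
      ≤ t^(2*L) / Real.Gamma ((L:ℝ)-1/2)^2 * ((t^2)^k / k.factorial) := by
  have hL2 : (2:ℝ) ≤ (L:ℝ) := by exact_mod_cast hL
  have hk0 : (0:ℝ) ≤ (k:ℝ) := Nat.cast_nonneg k
  set ΓL := Real.Gamma ((L:ℝ)-1/2) with hΓL
  have hΓLpos : 0 < ΓL := Real.Gamma_pos_of_pos (by linarith)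
  set Γk := Real.Gamma (((L+k:ℕ):ℝ)+3/2) with hΓk
  have hstep1 : ΓL * ((k+1).factorial : ℝ) ≤ Real.Gamma (((L:ℝ)-1/2) + ((k+1:ℕ):ℝ)) :=
    gamma_mul_factorial_le (by linarith) (k+1)
  have hargpos : (0:ℝ) < ((L:ℝ)-1/2) + ((k+1:ℕ):ℝ) := by push_cast; linarith
  have heq : Γk = (((L:ℝ)-1/2) + ((k+1:ℕ):ℝ)) * Real.Gamma (((L:ℝ)-1/2) + ((k+1:ℕ):ℝ)) := by
    rw [hΓk, show (((L+k:ℕ):ℝ)+3/2) = (((L:ℝ)-1/2) + ((k+1:ℕ):ℝ)) + 1 by push_cast; ring,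
      Real.Gamma_add_one (ne_of_gt hargpos)]
  have hΓkge : (((L:ℝ)-1/2) + ((k+1:ℕ):ℝ)) * (ΓL * ((k+1).factorial : ℝ)) ≤ Γk := by
    rw [heq]
    exact mul_le_mul_of_nonneg_left hstep1 (le_of_lt hargpos)
  have hfac1 : (1:ℝ) ≤ (k.factorial : ℝ) := by
    exact_mod_cast Nat.one_le_iff_ne_zero.mpr k.factorial_ne_zero
  have hfacsucc : ((k+1).factorial : ℝ) = ((k:ℝ)+1) * (k.factorial : ℝ) := by
    push_cast [Nat.factorial_succ]; ring
  have hlow : (0:ℝ) ≤ (((L:ℝ)-1/2) + ((k+1:ℕ):ℝ)) * (ΓL * ((k+1).factorial : ℝ)) := by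
    positivity
  have hsq := mul_self_le_mul_self hlow hΓkge
  have core : (2*((L+k:ℕ):ℝ)+1) * (ΓL^2 * (k.factorial : ℝ)) ≤ Γk^2 := by
    push_cast at hsq ⊢
    rw [hfacsucc] at hsq
    have c1 : 2*((L:ℝ)+(k:ℝ))+1 ≤ ((L:ℝ)-1/2+((k:ℝ)+1))^2 := by nlinarith
    have c2 : (1:ℝ) ≤ ((k:ℝ)+1)^2*(k.factorial:ℝ) := by nlinarith
    have h : 2*((L:ℝ)+(k:ℝ))+1 ≤
        ((L:ℝ)-1/2+((k:ℝ)+1))^2 * (((k:ℝ)+1)^2*(k.factorial:ℝ)) := by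
      nlinarith [sq_nonneg ((L:ℝ)-1/2+((k:ℝ)+1)), c1, c2]
    have h2 := mul_le_mul_of_nonneg_right h
      (show (0:ℝ) ≤ ΓL^2 * (k.factorial:ℝ) by positivity)
    calc (2*((L:ℝ)+(k:ℝ))+1) * (ΓL^2 * (k.factorial:ℝ))
        ≤ (((L:ℝ)-1/2+((k:ℝ)+1))^2 * (((k:ℝ)+1)^2*(k.factorial:ℝ))) *
            (ΓL^2 * (k.factorial:ℝ)) := h2
      _ = ((L:ℝ)-1/2+((k:ℝ)+1)) * (ΓL*(((k:ℝ)+1)*(k.factorial:ℝ))) *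
            (((L:ℝ)-1/2+((k:ℝ)+1)) * (ΓL*(((k:ℝ)+1)*(k.factorial:ℝ)))) := by ring
      _ ≤ Γk * Γk := hsq
      _ = Γk^2 := (sq Γk).symm
  have hΓkpos : 0 < Γk := Real.Gamma_pos_of_pos (by positivity)
  have hpow : t^(2*(L+k)) = t^(2*L) * (t^2)^k := by
    rw [← pow_mul, ← pow_add]; congr 1; ring
  have hR : t^(2*L) / ΓL^2 * ((t^2)^k / (k.factorial:ℝ))
      = (t^(2*L) * (t^2)^k) / (ΓL^2 * (k.factorial:ℝ)) := by
    field_simp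
  rw [hpow, hR, div_le_div_iff₀ (by positivity) (by positivity)]
  have hmul := mul_le_mul_of_nonneg_left core (show (0:ℝ) ≤ t^(2*L)*(t^2)^k by positivity)
  refine le_trans (le_of_eq (by ring)) (le_trans hmul (le_of_eq (by ring)))

/-- If `G` has bounded support `[0,δ]` (`G((δ,∞)) = 0`), then there is
`C > 0` (depending only on `δ` and `G([0,δ])`) such that for every `L ≥ 2`,
`Σ_{l≥L}(2l+1)C_l ≤ (C/Γ(L−1/2)²)(δ/2)^{2L}` (stated in `ℝ≥0∞`). -/
theorem tail_sum_bounded_support_decay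
    (δ : ℝ) (hδ : 0 < δ)
    (G : MeasureTheory.Measure ℝ) [MeasureTheory.IsFiniteMeasure G]
    (hG0 : G (Set.Iio 0) = 0) (hsupp : G (Set.Ioi δ) = 0) :
    ∃ C : ℝ, 0 < C ∧
      ∀ L : ℕ, 2 ≤ L →
        ∑' l : ℕ, ENNReal.ofReal ((2 * ((L + l : ℕ) : ℝ) + 1) * Cl0 G (L + l))
          ≤ ENNReal.ofReal
              (C / Real.Gamma ((L : ℝ) - 1 / 2) ^ 2 * (δ / 2) ^ (2 * L)) := by
  set E : ℝ := expS (δ/2) with hE_def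
  have hE1 : (1:ℝ) ≤ E := one_le_expS _
  have hEpos : (0:ℝ) < E := by linarith
  set g : ℝ := (G Set.univ).toReal with hg_def
  have hg : 0 ≤ g := ENNReal.toReal_nonneg
  refine ⟨2 * Real.pi ^ 2 * g * E^3 + 1, by positivity, ?_⟩
  intro L hL
  have hL2 : (2:ℝ) ≤ (L:ℝ) := by exact_mod_cast hL
  have hΓL : 0 < Real.Gamma ((L:ℝ) - 1/2) := Real.Gamma_pos_of_pos (by linarith)
  set ΓL : ℝ := Real.Gamma ((L:ℝ) - 1/2) with hΓL_def
  set A : ℝ := 2 * Real.pi ^ 2 * g * E^2 * ((δ/2)^(2*L) / ΓL^2) with hA_def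
  have hA : 0 ≤ A := by positivity
  set c : ℕ → ℝ := fun k => A * (((δ/2)^2)^k / k.factorial) with hc_def
  have hcnn : ∀ k, 0 ≤ c k := fun k => mul_nonneg hA (by positivity)
  have hcs : Summable c := (summable_expS (δ/2)).mul_left A
  have hterm : ∀ k : ℕ, (2 * ((L + k : ℕ) : ℝ) + 1) * Cl0 G (L + k) ≤ c k := by
    intro k
    have hlk : 1 ≤ L + k := le_trans (le_trans one_le_two hL) (Nat.le_add_right L k)
    have h1 := Cl0_le hδ G hsupp hlk
    have h2 := mul_le_mul_of_nonneg_left h1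
      (show (0:ℝ) ≤ 2 * ((L + k : ℕ) : ℝ) + 1 by positivity)
    refine le_trans h2 ?_
    have h3 := key_ineq hL k (show (0:ℝ) ≤ δ/2 by linarith)
    have h4 := mul_le_mul_of_nonneg_left h3
      (show (0:ℝ) ≤ 2 * Real.pi ^ 2 * g * E^2 by positivity)
    calc (2 * ((L + k : ℕ) : ℝ) + 1) *
          (2 * Real.pi ^ 2 * g * (E^2 * (δ/2)^(2*(L+k)) / Real.Gamma (((L+k:ℕ):ℝ)+3/2)^2))
        = (2 * Real.pi ^ 2 * g * E^2) *
          ((2*((L+k:ℕ):ℝ)+1) * (δ/2)^(2*(L+k)) / Real.Gamma (((L+k:ℕ):ℝ)+3/2)^2) := by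
          ring
      _ ≤ (2 * Real.pi ^ 2 * g * E^2) *
          ((δ/2)^(2*L) / ΓL^2 * (((δ/2)^2)^k / k.factorial)) := h4
      _ = c k := by rw [hc_def, hA_def]; ring
  have hsum : ∑' k : ℕ, c k = A * E := by
    rw [hc_def, tsum_mul_left, hE_def]; rfl
  have hfinal : A * E ≤ (2 * Real.pi ^ 2 * g * E^3 + 1) / ΓL^2 * (δ/2)^(2*L) := by
    have h5 := mul_le_mul_of_nonneg_right
      (show 2 * Real.pi ^ 2 * g * E^3 ≤ 2 * Real.pi ^ 2 * g * E^3 + 1 by linarith)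
      (show (0:ℝ) ≤ (δ/2)^(2*L) / ΓL^2 by positivity)
    calc A * E = (2 * Real.pi ^ 2 * g * E^3) * ((δ/2)^(2*L) / ΓL^2) := by
          rw [hA_def]; ring
      _ ≤ (2 * Real.pi ^ 2 * g * E^3 + 1) * ((δ/2)^(2*L) / ΓL^2) := h5
      _ = (2 * Real.pi ^ 2 * g * E^3 + 1) / ΓL^2 * (δ/2)^(2*L) := by ring
  calc ∑' l : ℕ, ENNReal.ofReal ((2 * ((L + l : ℕ) : ℝ) + 1) * Cl0 G (L + l))
      ≤ ∑' l : ℕ, ENNReal.ofReal (c l) :=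
        ENNReal.tsum_le_tsum (fun k => ENNReal.ofReal_le_ofReal (hterm k))
    _ = ENNReal.ofReal (∑' k : ℕ, c k) :=
        (ENNReal.ofReal_tsum_of_nonneg hcnn hcs).symm
    _ ≤ ENNReal.ofReal
          ((2 * Real.pi ^ 2 * g * E^3 + 1) / ΓL^2 * (δ / 2) ^ (2 * L)) := by
        rw [hsum]; exact ENNReal.ofReal_le_ofReal hfinal
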